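/- arXiv:2512.21656 — 2 statements merged into one kernel-verified Lean document; each statement's English description precedes it below -/
import Mathlib

section
/- (Theorem 2) Let n ≥ 1 and let P : {0,…,n}³ → ℝ³ be control points defining the trivariate Bézier map T(u,v,w) = Σ_{i=0}^{n} Σ_{j=0}^{n} Σ_{k=0}^{n} P_{ijk} B_i^n(u) B_j^n(v) B_k^n(w). If J_{pqr} > 0 for all p, q, r ∈ {0,…,3n−1}, then the Jacobian determinant det[∂T/∂u, ∂T/∂v, ∂T/∂w](u,v,w) > 0 for all (u,v,w) ∈ [0,1]³; that is, the mapping T is regular on [0,1]³. -/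
/-- Determinant of the 3×3 real matrix whose columns are `a`, `b`, `c`. -/
noncomputable def det3 (a b c : EuclideanSpace ℝ (Fin 3)) : ℝ :=
  Matrix.det (Matrix.of ![![a 0, b 0, c 0], ![a 1, b 1, c 1], ![a 2, b 2, c 2]])

/-- The Bernstein basis polynomial `B_i^n(t) = C(n,i) tⁱ (1−t)^{n−i}` as a real
function. -/
noncomputable def bern (n i : ℕ) (t : ℝ) : ℝ :=
  (n.choose i : ℝ) * t ^ i * (1 - t) ^ (n - i)

/-- The trivariate Bézier volume of degree `(n,n,n)` with control points `P`. -/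
noncomputable def bezierVolume (n : ℕ) (P : ℕ → ℕ → ℕ → EuclideanSpace ℝ (Fin 3))
    (u v w : ℝ) : EuclideanSpace ℝ (Fin 3) :=
  ∑ i ∈ Finset.range (n + 1), ∑ j ∈ Finset.range (n + 1), ∑ k ∈ Finset.range (n + 1),
    (bern n i u * bern n j v * bern n k w) • P i j k

/-- `D(i₁,j₁,k₁,i₂,j₂,k₂,i₃,j₃,k₃) = n³ det[ΔᵘP, ΔᵛP, ΔʷP]`. -/
noncomputable def Dcoef (n : ℕ) (P : ℕ → ℕ → ℕ → EuclideanSpace ℝ (Fin 3))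
    (i₁ j₁ k₁ i₂ j₂ k₂ i₃ j₃ k₃ : ℕ) : ℝ :=
  (n : ℝ) ^ 3 *
    det3 (P (i₁ + 1) j₁ k₁ - P i₁ j₁ k₁) (P i₂ (j₂ + 1) k₂ - P i₂ j₂ k₂)
      (P i₃ j₃ (k₃ + 1) - P i₃ j₃ k₃)

/-- The Bézier coefficients `J_{pqr}` of the Jacobian determinant of the trivariate
Bézier volume of degree `n` with control points `P`. -/
noncomputable def Jcoef (n : ℕ) (P : ℕ → ℕ → ℕ → EuclideanSpace ℝ (Fin 3))
    (p q r : ℕ) : ℝ :=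
  ∑ i₁ ∈ Finset.range n, ∑ i₂ ∈ Finset.range (n + 1), ∑ i₃ ∈ Finset.range (n + 1),
  ∑ j₁ ∈ Finset.range (n + 1), ∑ j₂ ∈ Finset.range n, ∑ j₃ ∈ Finset.range (n + 1),
  ∑ k₁ ∈ Finset.range (n + 1), ∑ k₂ ∈ Finset.range (n + 1), ∑ k₃ ∈ Finset.range n,
    if i₁ + i₂ + i₃ = p ∧ j₁ + j₂ + j₃ = q ∧ k₁ + k₂ + k₃ = r then
      Dcoef n P i₁ j₁ k₁ i₂ j₂ k₂ i₃ j₃ k₃ *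
        (((n - 1).choose i₁ * n.choose i₂ * n.choose i₃ * n.choose j₁ *
            (n - 1).choose j₂ * n.choose j₃ * n.choose k₁ * n.choose k₂ *
            (n - 1).choose k₃ : ℕ) : ℝ) /
        (((3 * n - 1).choose p * (3 * n - 1).choose q * (3 * n - 1).choose r : ℕ) : ℝ)
    else 0

section BezierAux
lemma det3_def' (a b c : EuclideanSpace ℝ (Fin 3)) :
    det3 a b c = a 0 * b 1 * c 2 - a 0 * c 1 * b 2 - b 0 * a 1 * c 2 + b 0 * c 1 * a 2
      + c 0 * a 1 * b 2 - c 0 * b 1 * a 2 := by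
  simp [det3, Matrix.det_fin_three]

lemma det3_add₁ (x y b c : EuclideanSpace ℝ (Fin 3)) :
    det3 (x + y) b c = det3 x b c + det3 y b c := by
  simp only [det3_def', PiLp.add_apply]; ring

lemma det3_add₂ (a x y c : EuclideanSpace ℝ (Fin 3)) :
    det3 a (x + y) c = det3 a x c + det3 a y c := by
  simp only [det3_def', PiLp.add_apply]; ring

lemma det3_add₃ (a b x y : EuclideanSpace ℝ (Fin 3)) :
    det3 a b (x + y) = det3 a b x + det3 a b y := by
  simp only [det3_def', PiLp.add_apply]; ring

lemma det3_zero₁ (b c : EuclideanSpace ℝ (Fin 3)) : det3 0 b c = 0 := by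
  simp only [det3_def', PiLp.zero_apply]; ring

lemma det3_zero₂ (a c : EuclideanSpace ℝ (Fin 3)) : det3 a 0 c = 0 := by
  simp only [det3_def', PiLp.zero_apply]; ring

lemma det3_zero₃ (a b : EuclideanSpace ℝ (Fin 3)) : det3 a b 0 = 0 := by
  simp only [det3_def', PiLp.zero_apply]; ring

lemma det3_smul₁ (r : ℝ) (x b c : EuclideanSpace ℝ (Fin 3)) :
    det3 (r • x) b c = r * det3 x b c := by
  simp only [det3_def', PiLp.smul_apply, smul_eq_mul]; ring

lemma det3_smul₂ (r : ℝ) (a x c : EuclideanSpace ℝ (Fin 3)) :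
    det3 a (r • x) c = r * det3 a x c := by
  simp only [det3_def', PiLp.smul_apply, smul_eq_mul]; ring

lemma det3_smul₃ (r : ℝ) (a b x : EuclideanSpace ℝ (Fin 3)) :
    det3 a b (r • x) = r * det3 a b x := by
  simp only [det3_def', PiLp.smul_apply, smul_eq_mul]; ring

lemma det3_sum₁ {α : Type*} (s : Finset α) (f : α → EuclideanSpace ℝ (Fin 3))
    (b c : EuclideanSpace ℝ (Fin 3)) :
    det3 (∑ x ∈ s, f x) b c = ∑ x ∈ s, det3 (f x) b c := by
  classical
  induction s using Finset.cons_induction with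
  | empty => simp [det3_zero₁]
  | cons a s ha ih => rw [Finset.sum_cons, Finset.sum_cons, det3_add₁, ih]

lemma det3_sum₂ {α : Type*} (s : Finset α) (a : EuclideanSpace ℝ (Fin 3))
    (f : α → EuclideanSpace ℝ (Fin 3)) (c : EuclideanSpace ℝ (Fin 3)) :
    det3 a (∑ x ∈ s, f x) c = ∑ x ∈ s, det3 a (f x) c := by
  classical
  induction s using Finset.cons_induction with
  | empty => simp [det3_zero₂]
  | cons a' s ha ih => rw [Finset.sum_cons, Finset.sum_cons, det3_add₂, ih]

lemma det3_sum₃ {α : Type*} (s : Finset α) (a b : EuclideanSpace ℝ (Fin 3))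
    (f : α → EuclideanSpace ℝ (Fin 3)) :
    det3 a b (∑ x ∈ s, f x) = ∑ x ∈ s, det3 a b (f x) := by
  classical
  induction s using Finset.cons_induction with
  | empty => simp [det3_zero₃]
  | cons a' s ha ih => rw [Finset.sum_cons, Finset.sum_cons, det3_add₃, ih]

lemma bern_nonneg {n i : ℕ} {t : ℝ} (h0 : 0 ≤ t) (h1 : t ≤ 1) : 0 ≤ bern n i t := by
  have : (0:ℝ) ≤ 1 - t := by linarith
  unfold bern; positivity

lemma bern_sum (n : ℕ) (t : ℝ) : ∑ i ∈ Finset.range (n + 1), bern n i t = 1 := by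
  have h := add_pow t (1 - t) n
  simp only [add_sub_cancel, one_pow] at h
  conv_rhs => rw [h]
  refine Finset.sum_congr rfl fun i _ => ?_
  unfold bern; ring

lemma exists_bern_pos (m : ℕ) {t : ℝ} (h0 : 0 ≤ t) (h1 : t ≤ 1) :
    ∃ p ≤ m, 0 < bern m p t := by
  rcases lt_or_eq_of_le h1 with h | h
  · have hlt : (0:ℝ) < 1 - t := by linarith
    exact ⟨0, Nat.zero_le m, by unfold bern; simpa using pow_pos hlt m⟩
  · refine ⟨m, le_refl m, ?_⟩
    unfold bern; simp [h, Nat.sub_self]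

noncomputable def bernDeriv (n i : ℕ) (t : ℝ) : ℝ :=
  (n : ℝ) * ((if i = 0 then 0 else bern (n - 1) (i - 1) t) - bern (n - 1) i t)

lemma hasDerivAt_bern (n i : ℕ) (hn : 1 ≤ n) (t : ℝ) :
    HasDerivAt (bern n i) (bernDeriv n i t) t := by
  have hp : HasDerivAt (fun s : ℝ => s ^ i) ((i : ℝ) * t ^ (i - 1)) t := hasDerivAt_pow i t
  have h1 : HasDerivAt (fun s : ℝ => 1 - s) (-1) t := (hasDerivAt_id t).const_sub 1
  have hq : HasDerivAt (fun s : ℝ => (1 - s) ^ (n - i))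
      (-(((n - i : ℕ) : ℝ) * (1 - t) ^ (n - i - 1))) t := by
    have h2 := (hasDerivAt_pow (n - i) (1 - t)).comp t h1
    simpa [Function.comp_def, mul_comm, mul_left_comm, mul_assoc] using h2
  have h := (hp.mul hq).const_mul (n.choose i : ℝ)
  have hfun : bern n i = fun s => (n.choose i : ℝ) * (s ^ i * (1 - s) ^ (n - i)) := by
    funext s; simp [bern, mul_assoc]
  rw [hfun]
  refine HasDerivAt.congr_deriv h (Eq.symm ?_)
  rcases i with _ | i'
  · simp [bernDeriv, bern, Nat.sub_zero]
  · by_cases hi : i' + 1 ≤ n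
    · have hA := Nat.add_one_mul_choose_eq (n - 1) i'
      rw [Nat.sub_add_cancel hn] at hA
      have hA' : (i' + 1) * n.choose (i' + 1) = n * (n - 1).choose i' := by
        rw [Nat.mul_comm]; exact hA.symm
      have hc1 : ((i' + 1 : ℕ) : ℝ) * (n.choose (i' + 1) : ℝ)
          = (n : ℝ) * ((n - 1).choose i' : ℝ) := by exact_mod_cast hA'
      have hB := Nat.choose_mul_succ_eq (n - 1) (i' + 1)
      rw [Nat.sub_add_cancel hn] at hB
      have hB' : (n - (i' + 1)) * n.choose (i' + 1) = n * ((n - 1).choose (i' + 1)) := by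
        rw [Nat.mul_comm (n - (i' + 1)), Nat.mul_comm n]; exact hB.symm
      have hc2 : ((n - (i' + 1) : ℕ) : ℝ) * (n.choose (i' + 1) : ℝ)
          = (n : ℝ) * ((n - 1).choose (i' + 1) : ℝ) := by exact_mod_cast hB'
      simp only [bernDeriv, bern, Nat.add_sub_cancel, if_neg (Nat.succ_ne_zero i')]
      rw [show n - (i' + 1) - 1 = (n - 1) - (i' + 1) by omega]
      rw [show (n - 1 : ℕ) - i' = n - (i' + 1) by omega]
      push_cast at hc1 hc2 ⊢
      linear_combination (-(t ^ i' * (1 - t) ^ (n - (i' + 1)))) * hc1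
        + (t ^ (i' + 1) * (1 - t) ^ ((n - 1) - (i' + 1))) * hc2
    · have h0 : n.choose (i' + 1) = 0 := Nat.choose_eq_zero_of_lt (by omega)
      have h1' : (n - 1).choose i' = 0 := Nat.choose_eq_zero_of_lt (by omega)
      have h2' : (n - 1).choose (i' + 1) = 0 := Nat.choose_eq_zero_of_lt (by omega)
      simp [bernDeriv, bern, h0, h1', h2']

lemma hasDerivAt_bernSum (n : ℕ) (hn : 1 ≤ n) (R : ℕ → EuclideanSpace ℝ (Fin 3)) (t : ℝ) :
    HasDerivAt (fun s => ∑ i ∈ Finset.range (n + 1), bern n i s • R i)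
      (∑ i ∈ Finset.range n, ((n : ℝ) * bern (n - 1) i t) • (R (i + 1) - R i)) t := by
  have h1 : HasDerivAt (fun s => ∑ i ∈ Finset.range (n + 1), bern n i s • R i)
      (∑ i ∈ Finset.range (n + 1), bernDeriv n i t • R i) t :=
    HasDerivAt.fun_sum fun i _ => (hasDerivAt_bern n i hn t).smul_const (R i)
  have hval : ∑ i ∈ Finset.range (n + 1), bernDeriv n i t • R i
      = ∑ i ∈ Finset.range n, ((n : ℝ) * bern (n - 1) i t) • (R (i + 1) - R i) := by
    set g : ℕ → EuclideanSpace ℝ (Fin 3) := fun i => ((n : ℝ) * bern (n - 1) i t) • R i with hg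
    have hgn : g n = 0 := by
      have : bern (n - 1) n t = 0 := by
        simp [bern, Nat.choose_eq_zero_of_lt (by omega : n - 1 < n)]
      simp [hg, this]
    have hshift : ∑ i ∈ Finset.range n, g (i + 1)
        = ∑ i ∈ Finset.range n, g i - g 0 := by
      have e1 : ∑ i ∈ Finset.range (n + 1), g i
          = ∑ i ∈ Finset.range n, g (i + 1) + g 0 := Finset.sum_range_succ' g n
      have e2 : ∑ i ∈ Finset.range (n + 1), g i
          = ∑ i ∈ Finset.range n, g i + g n := Finset.sum_range_succ g n
      rw [hgn, add_zero] at e2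
      rw [e2] at e1
      exact (eq_sub_of_add_eq e1.symm)
    rw [Finset.sum_range_succ']
    have e3 : ∀ i, bernDeriv n (i + 1) t • R (i + 1)
        = ((n : ℝ) * bern (n - 1) i t) • R (i + 1) - g (i + 1) := by
      intro i
      simp only [bernDeriv, if_neg (Nat.succ_ne_zero i), Nat.add_sub_cancel, hg]
      rw [mul_sub, sub_smul]
    have e4 : bernDeriv n 0 t • R 0 = -g 0 := by
      simp only [bernDeriv, hg, if_true]
      rw [zero_sub, mul_neg, neg_smul]
    rw [e4]
    simp only [e3]
    rw [Finset.sum_sub_distrib, hshift]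
    simp only [smul_sub, Finset.sum_sub_distrib]
    abel
  rw [hval] at h1
  exact h1

lemma bern_mul {a b i j : ℕ} (hi : i ≤ a) (hj : j ≤ b) (t : ℝ) :
    bern a i t * bern b j t
      = ((a.choose i * b.choose j : ℕ) : ℝ) / (((a + b).choose (i + j) : ℕ) : ℝ)
        * bern (a + b) (i + j) t := by
  have hne : (((a + b).choose (i + j) : ℕ) : ℝ) ≠ 0 := by
    exact_mod_cast (Nat.choose_pos (Nat.add_le_add hi hj)).ne'
  unfold bern
  rw [show a + b - (i + j) = (a - i) + (b - j) by omega]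
  field_simp
  push_cast
  ring

lemma bern_mul3 {a b c i j k d s : ℕ} (hi : i ≤ a) (hj : j ≤ b) (hk : k ≤ c)
    (hd : a + b + c = d) (hs : i + j + k = s) (t : ℝ) :
    bern a i t * bern b j t * bern c k t
      = ((a.choose i * b.choose j * c.choose k : ℕ) : ℝ) / ((d.choose s : ℕ) : ℝ)
        * bern d s t := by
  subst hd hs
  have hY : (((a + b).choose (i + j) : ℕ) : ℝ) ≠ 0 := by
    exact_mod_cast (Nat.choose_pos (Nat.add_le_add hi hj)).ne'
  rw [bern_mul hi hj, mul_assoc, bern_mul (Nat.add_le_add hi hj) hk]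
  push_cast
  have hc : (((a + b).choose (i + j) : ℕ) : ℝ) * (((a + b).choose (i + j) : ℕ) : ℝ)⁻¹ = 1 :=
    mul_inv_cancel₀ hY
  linear_combination ((a.choose i : ℝ) * (b.choose j : ℝ) * (c.choose k : ℝ) *
    bern (a + b + c) (i + j + k) t * ((((a + b + c).choose (i + j + k) : ℕ) : ℝ))⁻¹) * hc

lemma sub_R (c : ℕ → ℕ → ℝ) (A B : ℕ → ℕ → EuclideanSpace ℝ (Fin 3)) (m : ℕ) :
    ((∑ j ∈ Finset.range m, ∑ k ∈ Finset.range m, c j k • A j k)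
      - ∑ j ∈ Finset.range m, ∑ k ∈ Finset.range m, c j k • B j k)
    = ∑ j ∈ Finset.range m, ∑ k ∈ Finset.range m, c j k • (A j k - B j k) := by
  rw [← Finset.sum_sub_distrib]
  refine Finset.sum_congr rfl fun j _ => ?_
  rw [← Finset.sum_sub_distrib]
  exact Finset.sum_congr rfl fun k _ => (smul_sub _ _ _).symm

lemma deriv_bezier_u (n : ℕ) (hn : 1 ≤ n) (P : ℕ → ℕ → ℕ → EuclideanSpace ℝ (Fin 3))
    (v w u : ℝ) :
    deriv (fun t => bezierVolume n P t v w) u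
      = ∑ i ∈ Finset.range n, ∑ j ∈ Finset.range (n + 1), ∑ k ∈ Finset.range (n + 1),
          ((n : ℝ) * bern (n - 1) i u * bern n j v * bern n k w) • (P (i + 1) j k - P i j k) := by
  have hrep : (fun t => bezierVolume n P t v w)
      = fun t => ∑ i ∈ Finset.range (n + 1), bern n i t •
          (∑ j ∈ Finset.range (n + 1), ∑ k ∈ Finset.range (n + 1),
            (bern n j v * bern n k w) • P i j k) := by
    funext t; unfold bezierVolume
    simp only [Finset.smul_sum, smul_smul]
    exact Finset.sum_congr rfl fun i _ => Finset.sum_congr rfl fun j _ =>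
      Finset.sum_congr rfl fun k _ => by rw [mul_assoc]
  rw [hrep, (hasDerivAt_bernSum n hn _ u).deriv]
  refine Finset.sum_congr rfl fun i _ => ?_
  rw [sub_R (fun j k => bern n j v * bern n k w) (fun j k => P (i + 1) j k)
    (fun j k => P i j k) (n + 1)]
  rw [Finset.smul_sum]
  refine Finset.sum_congr rfl fun j _ => ?_
  rw [Finset.smul_sum]
  refine Finset.sum_congr rfl fun k _ => ?_
  rw [smul_smul]
  congr 1; ring

lemma deriv_bezier_v (n : ℕ) (hn : 1 ≤ n) (P : ℕ → ℕ → ℕ → EuclideanSpace ℝ (Fin 3))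
    (u w v : ℝ) :
    deriv (fun t => bezierVolume n P u t w) v
      = ∑ i ∈ Finset.range (n + 1), ∑ j ∈ Finset.range n, ∑ k ∈ Finset.range (n + 1),
          ((n : ℝ) * bern n i u * bern (n - 1) j v * bern n k w) • (P i (j + 1) k - P i j k) := by
  have hrep : (fun t => bezierVolume n P u t w)
      = fun t => ∑ j ∈ Finset.range (n + 1), bern n j t •
          (∑ i ∈ Finset.range (n + 1), ∑ k ∈ Finset.range (n + 1),
            (bern n i u * bern n k w) • P i j k) := by
    funext t; unfold bezierVolume
    rw [Finset.sum_comm]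
    simp only [Finset.smul_sum, smul_smul]
    exact Finset.sum_congr rfl fun j _ => Finset.sum_congr rfl fun i _ =>
      Finset.sum_congr rfl fun k _ => by congr 1; ring
  rw [hrep, (hasDerivAt_bernSum n hn _ v).deriv]
  have step : ∑ j ∈ Finset.range n, ((n : ℝ) * bern (n - 1) j v) •
        ((∑ i ∈ Finset.range (n + 1), ∑ k ∈ Finset.range (n + 1),
          (bern n i u * bern n k w) • P i (j + 1) k)
        - ∑ i ∈ Finset.range (n + 1), ∑ k ∈ Finset.range (n + 1),
          (bern n i u * bern n k w) • P i j k)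
      = ∑ j ∈ Finset.range n, ∑ i ∈ Finset.range (n + 1), ∑ k ∈ Finset.range (n + 1),
          ((n : ℝ) * bern n i u * bern (n - 1) j v * bern n k w) • (P i (j + 1) k - P i j k) := by
    refine Finset.sum_congr rfl fun j _ => ?_
    rw [sub_R (fun i k => bern n i u * bern n k w) (fun i k => P i (j + 1) k)
      (fun i k => P i j k) (n + 1)]
    rw [Finset.smul_sum]
    refine Finset.sum_congr rfl fun i _ => ?_
    rw [Finset.smul_sum]
    refine Finset.sum_congr rfl fun k _ => ?_
    rw [smul_smul]
    congr 1; ring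
  rw [step]
  exact Finset.sum_comm

lemma deriv_bezier_w (n : ℕ) (hn : 1 ≤ n) (P : ℕ → ℕ → ℕ → EuclideanSpace ℝ (Fin 3))
    (u v w : ℝ) :
    deriv (fun t => bezierVolume n P u v t) w
      = ∑ i ∈ Finset.range (n + 1), ∑ j ∈ Finset.range (n + 1), ∑ k ∈ Finset.range n,
          ((n : ℝ) * bern n i u * bern n j v * bern (n - 1) k w) • (P i j (k + 1) - P i j k) := by
  have hrep : (fun t => bezierVolume n P u v t)
      = fun t => ∑ k ∈ Finset.range (n + 1), bern n k t •
          (∑ i ∈ Finset.range (n + 1), ∑ j ∈ Finset.range (n + 1),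
            (bern n i u * bern n j v) • P i j k) := by
    funext t; unfold bezierVolume
    calc (∑ i ∈ Finset.range (n + 1), ∑ j ∈ Finset.range (n + 1),
        ∑ k ∈ Finset.range (n + 1), (bern n i u * bern n j v * bern n k t) • P i j k)
        = ∑ i ∈ Finset.range (n + 1), ∑ k ∈ Finset.range (n + 1),
            ∑ j ∈ Finset.range (n + 1), (bern n i u * bern n j v * bern n k t) • P i j k :=
          Finset.sum_congr rfl fun i _ => Finset.sum_comm
      _ = ∑ k ∈ Finset.range (n + 1), ∑ i ∈ Finset.range (n + 1),
            ∑ j ∈ Finset.range (n + 1), (bern n i u * bern n j v * bern n k t) • P i j k :=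
          Finset.sum_comm
      _ = ∑ k ∈ Finset.range (n + 1), bern n k t •
          (∑ i ∈ Finset.range (n + 1), ∑ j ∈ Finset.range (n + 1),
            (bern n i u * bern n j v) • P i j k) := by
          simp only [Finset.smul_sum, smul_smul]
          exact Finset.sum_congr rfl fun k _ => Finset.sum_congr rfl fun i _ =>
            Finset.sum_congr rfl fun j _ => by congr 1; ring
  rw [hrep, (hasDerivAt_bernSum n hn _ w).deriv]
  have step : ∑ k ∈ Finset.range n, ((n : ℝ) * bern (n - 1) k w) •
        ((∑ i ∈ Finset.range (n + 1), ∑ j ∈ Finset.range (n + 1),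
          (bern n i u * bern n j v) • P i j (k + 1))
        - ∑ i ∈ Finset.range (n + 1), ∑ j ∈ Finset.range (n + 1),
          (bern n i u * bern n j v) • P i j k)
      = ∑ k ∈ Finset.range n, ∑ i ∈ Finset.range (n + 1), ∑ j ∈ Finset.range (n + 1),
          ((n : ℝ) * bern n i u * bern n j v * bern (n - 1) k w) • (P i j (k + 1) - P i j k) := by
    refine Finset.sum_congr rfl fun k _ => ?_
    rw [sub_R (fun i j => bern n i u * bern n j v) (fun i j => P i j (k + 1))
      (fun i j => P i j k) (n + 1)]
    rw [Finset.smul_sum]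
    refine Finset.sum_congr rfl fun i _ => ?_
    rw [Finset.smul_sum]
    refine Finset.sum_congr rfl fun j _ => ?_
    rw [smul_smul]
    congr 1; ring
  rw [step]
  exact Finset.sum_comm.trans (Finset.sum_congr rfl fun i _ => Finset.sum_comm)

set_option maxHeartbeats 2000000 in
lemma detJac_eq_S (n : ℕ) (hn : 1 ≤ n) (P : ℕ → ℕ → ℕ → EuclideanSpace ℝ (Fin 3))
    (u v w : ℝ) :
    det3
      (∑ i ∈ Finset.range n, ∑ j ∈ Finset.range (n + 1), ∑ k ∈ Finset.range (n + 1),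
        ((n : ℝ) * bern (n - 1) i u * bern n j v * bern n k w) • (P (i + 1) j k - P i j k))
      (∑ i ∈ Finset.range (n + 1), ∑ j ∈ Finset.range n, ∑ k ∈ Finset.range (n + 1),
        ((n : ℝ) * bern n i u * bern (n - 1) j v * bern n k w) • (P i (j + 1) k - P i j k))
      (∑ i ∈ Finset.range (n + 1), ∑ j ∈ Finset.range (n + 1), ∑ k ∈ Finset.range n,
        ((n : ℝ) * bern n i u * bern n j v * bern (n - 1) k w) • (P i j (k + 1) - P i j k))
    = ∑ i₁ ∈ Finset.range n, ∑ i₂ ∈ Finset.range (n + 1), ∑ i₃ ∈ Finset.range (n + 1),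
      ∑ j₁ ∈ Finset.range (n + 1), ∑ j₂ ∈ Finset.range n, ∑ j₃ ∈ Finset.range (n + 1),
      ∑ k₁ ∈ Finset.range (n + 1), ∑ k₂ ∈ Finset.range (n + 1), ∑ k₃ ∈ Finset.range n,
        Dcoef n P i₁ j₁ k₁ i₂ j₂ k₂ i₃ j₃ k₃ *
          (((n - 1).choose i₁ * n.choose i₂ * n.choose i₃ * n.choose j₁ *
              (n - 1).choose j₂ * n.choose j₃ * n.choose k₁ * n.choose k₂ *
              (n - 1).choose k₃ : ℕ) : ℝ) /
          (((3 * n - 1).choose (i₁ + i₂ + i₃) * (3 * n - 1).choose (j₁ + j₂ + j₃)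
              * (3 * n - 1).choose (k₁ + k₂ + k₃) : ℕ) : ℝ)
          * bern (3 * n - 1) (i₁ + i₂ + i₃) u * bern (3 * n - 1) (j₁ + j₂ + j₃) v
          * bern (3 * n - 1) (k₁ + k₂ + k₃) w := by
  simp only [det3_sum₁, det3_smul₁, det3_sum₂, det3_smul₂, det3_sum₃, det3_smul₃,
    Finset.mul_sum]
  -- reorder sums: current [i3,j3,k3,i2,j2,k2,i1,j1,k1] -> [i1,i2,i3,j1,j2,j3,k1,k2,k3]
  conv_lhs => enter [2, x0, 2, x1]; rw [Finset.sum_comm]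
  conv_lhs => enter [2, x0, 2, x1, 2, x2]; rw [Finset.sum_comm]
  conv_lhs => enter [2, x0, 2, x1, 2, x2, 2, x3]; rw [Finset.sum_comm]
  conv_lhs => enter [2, x0, 2, x1, 2, x2, 2, x3, 2, x4]; rw [Finset.sum_comm]
  conv_lhs => enter [2, x0, 2, x1, 2, x2, 2, x3, 2, x4, 2, x5]; rw [Finset.sum_comm]
  conv_lhs => enter [2, x0, 2, x1, 2, x2, 2, x3, 2, x4, 2, x5, 2, x6]; rw [Finset.sum_comm]
  conv_lhs => enter [2, x0]; rw [Finset.sum_comm]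
  conv_lhs => enter [2, x0, 2, x1]; rw [Finset.sum_comm]
  conv_lhs => enter [2, x0, 2, x1, 2, x2, 2, x3]; rw [Finset.sum_comm]
  conv_lhs => enter [2, x0, 2, x1, 2, x2, 2, x3, 2, x4]; rw [Finset.sum_comm]
  conv_lhs => enter [2, x0, 2, x1, 2, x2, 2, x3, 2, x4, 2, x5]; rw [Finset.sum_comm]
  conv_lhs => rw [Finset.sum_comm]
  conv_lhs => enter [2, x0, 2, x1, 2, x2]; rw [Finset.sum_comm]
  conv_lhs => enter [2, x0, 2, x1, 2, x2, 2, x3]; rw [Finset.sum_comm]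
  conv_lhs => enter [2, x0, 2, x1]; rw [Finset.sum_comm]
  conv_lhs => enter [2, x0, 2, x1, 2, x2]; rw [Finset.sum_comm]
  conv_lhs => enter [2, x0]; rw [Finset.sum_comm]
  conv_lhs => rw [Finset.sum_comm]
  refine Finset.sum_congr rfl fun i1 hi1 => Finset.sum_congr rfl fun i2 hi2 =>
    Finset.sum_congr rfl fun i3 hi3 => Finset.sum_congr rfl fun j1 hj1 =>
    Finset.sum_congr rfl fun j2 hj2 => Finset.sum_congr rfl fun j3 hj3 =>
    Finset.sum_congr rfl fun k1 hk1 => Finset.sum_congr rfl fun k2 hk2 =>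
    Finset.sum_congr rfl fun k3 hk3 => ?_
  simp only [Finset.mem_range] at hi1 hi2 hi3 hj1 hj2 hj3 hk1 hk2 hk3
  have hu : bern (n - 1) i1 u * bern n i2 u * bern n i3 u
      = (((n - 1).choose i1 * n.choose i2 * n.choose i3 : ℕ) : ℝ)
        / (((3 * n - 1).choose (i1 + i2 + i3) : ℕ) : ℝ) * bern (3 * n - 1) (i1 + i2 + i3) u :=
    bern_mul3 (by omega) (by omega) (by omega) (by omega) rfl u
  have hv : bern n j1 v * bern (n - 1) j2 v * bern n j3 v
      = ((n.choose j1 * (n - 1).choose j2 * n.choose j3 : ℕ) : ℝ)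
        / (((3 * n - 1).choose (j1 + j2 + j3) : ℕ) : ℝ) * bern (3 * n - 1) (j1 + j2 + j3) v :=
    bern_mul3 (by omega) (by omega) (by omega) (by omega) rfl v
  have hw : bern n k1 w * bern n k2 w * bern (n - 1) k3 w
      = ((n.choose k1 * n.choose k2 * (n - 1).choose k3 : ℕ) : ℝ)
        / (((3 * n - 1).choose (k1 + k2 + k3) : ℕ) : ℝ) * bern (3 * n - 1) (k1 + k2 + k3) w :=
    bern_mul3 (by omega) (by omega) (by omega) (by omega) rfl w
  calc _ = ((n : ℝ) ^ 3 * det3 (P (i1 + 1) j1 k1 - P i1 j1 k1) (P i2 (j2 + 1) k2 - P i2 j2 k2)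
        (P i3 j3 (k3 + 1) - P i3 j3 k3))
        * (bern (n - 1) i1 u * bern n i2 u * bern n i3 u)
        * (bern n j1 v * bern (n - 1) j2 v * bern n j3 v)
        * (bern n k1 w * bern n k2 w * bern (n - 1) k3 w) := by ring
    _ = _ := by
        rw [hu, hv, hw]
        unfold Dcoef
        push_cast
        ring

lemma sum_push3 {M : Type*} [AddCommMonoid M] (N : ℕ) (s : Finset ℕ) (f : ℕ → ℕ → ℕ → ℕ → M) :
    (∑ p ∈ Finset.range N, ∑ q ∈ Finset.range N, ∑ r ∈ Finset.range N, ∑ a ∈ s, f p q r a)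
    = ∑ a ∈ s, ∑ p ∈ Finset.range N, ∑ q ∈ Finset.range N, ∑ r ∈ Finset.range N, f p q r a :=
  (Finset.sum_congr rfl fun p _ =>
    (Finset.sum_congr rfl fun q _ => Finset.sum_comm).trans Finset.sum_comm).trans
    Finset.sum_comm

lemma sum_ite_eval (N A B C : ℕ) (hA : A < N) (hB : B < N) (hC : C < N) (X : ℕ → ℕ → ℕ → ℝ) :
    (∑ p ∈ Finset.range N, ∑ q ∈ Finset.range N, ∑ r ∈ Finset.range N,
      if A = p ∧ B = q ∧ C = r then X p q r else 0) = X A B C := by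
  rw [Finset.sum_eq_single_of_mem A (Finset.mem_range.2 hA)]
  · rw [Finset.sum_eq_single_of_mem B (Finset.mem_range.2 hB)]
    · rw [Finset.sum_eq_single_of_mem C (Finset.mem_range.2 hC)]
      · rw [if_pos ⟨rfl, rfl, rfl⟩]
      · intro r _ hr; exact if_neg fun h => hr (h.2.2.symm)
    · intro q _ hq; exact Finset.sum_eq_zero fun r _ => if_neg fun h => hq (h.2.1.symm)
  · intro p _ hp
    exact Finset.sum_eq_zero fun q _ => Finset.sum_eq_zero fun r _ => if_neg fun h => hp (h.1.symm)

set_option maxHeartbeats 2000000 in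
lemma J_sum_eq_S (n : ℕ) (hn : 1 ≤ n) (P : ℕ → ℕ → ℕ → EuclideanSpace ℝ (Fin 3))
    (u v w : ℝ) :
    (∑ p ∈ Finset.range (3 * n), ∑ q ∈ Finset.range (3 * n), ∑ r ∈ Finset.range (3 * n),
      Jcoef n P p q r * bern (3 * n - 1) p u * bern (3 * n - 1) q v * bern (3 * n - 1) r w)
    = ∑ i₁ ∈ Finset.range n, ∑ i₂ ∈ Finset.range (n + 1), ∑ i₃ ∈ Finset.range (n + 1),
      ∑ j₁ ∈ Finset.range (n + 1), ∑ j₂ ∈ Finset.range n, ∑ j₃ ∈ Finset.range (n + 1),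
      ∑ k₁ ∈ Finset.range (n + 1), ∑ k₂ ∈ Finset.range (n + 1), ∑ k₃ ∈ Finset.range n,
        Dcoef n P i₁ j₁ k₁ i₂ j₂ k₂ i₃ j₃ k₃ *
          (((n - 1).choose i₁ * n.choose i₂ * n.choose i₃ * n.choose j₁ *
              (n - 1).choose j₂ * n.choose j₃ * n.choose k₁ * n.choose k₂ *
              (n - 1).choose k₃ : ℕ) : ℝ) /
          (((3 * n - 1).choose (i₁ + i₂ + i₃) * (3 * n - 1).choose (j₁ + j₂ + j₃)
              * (3 * n - 1).choose (k₁ + k₂ + k₃) : ℕ) : ℝ)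
          * bern (3 * n - 1) (i₁ + i₂ + i₃) u * bern (3 * n - 1) (j₁ + j₂ + j₃) v
          * bern (3 * n - 1) (k₁ + k₂ + k₃) w := by
  unfold Jcoef
  simp (config := { maxSteps := 100000000 }) only [Finset.sum_mul, ite_mul, zero_mul]
  simp (config := { maxSteps := 100000000 }) only [sum_push3 (3 * n)]
  refine Finset.sum_congr rfl fun i1 hi1 => Finset.sum_congr rfl fun i2 hi2 =>
    Finset.sum_congr rfl fun i3 hi3 => Finset.sum_congr rfl fun j1 hj1 =>
    Finset.sum_congr rfl fun j2 hj2 => Finset.sum_congr rfl fun j3 hj3 =>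
    Finset.sum_congr rfl fun k1 hk1 => Finset.sum_congr rfl fun k2 hk2 =>
    Finset.sum_congr rfl fun k3 hk3 => ?_
  simp only [Finset.mem_range] at hi1 hi2 hi3 hj1 hj2 hj3 hk1 hk2 hk3
  exact sum_ite_eval (3 * n) (i1 + i2 + i3) (j1 + j2 + j3) (k1 + k2 + k3)
    (by omega) (by omega) (by omega) _

end BezierAux

/-- Theorem 2: if all Bézier coefficients `J_{pqr}` of the Jacobian
determinant are positive, then the trivariate Bézier volume is regular on `[0,1]³`. -/
theorem bezier_volume_regular_of_Jcoef_pos (n : ℕ) (hn : 1 ≤ n)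
    (P : ℕ → ℕ → ℕ → EuclideanSpace ℝ (Fin 3))
    (hJ : ∀ p q r : ℕ, p < 3 * n → q < 3 * n → r < 3 * n → 0 < Jcoef n P p q r) :
    ∀ u ∈ Set.Icc (0:ℝ) 1, ∀ v ∈ Set.Icc (0:ℝ) 1, ∀ w ∈ Set.Icc (0:ℝ) 1,
      0 < det3 (deriv (fun t => bezierVolume n P t v w) u)
          (deriv (fun t => bezierVolume n P u t w) v)
          (deriv (fun t => bezierVolume n P u v t) w) := by
  intro u hu v hv w hw
  obtain ⟨h0u, h1u⟩ := hu
  obtain ⟨h0v, h1v⟩ := hv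
  obtain ⟨h0w, h1w⟩ := hw
  rw [deriv_bezier_u n hn P v w u, deriv_bezier_v n hn P u w v, deriv_bezier_w n hn P u v w,
    detJac_eq_S n hn P u v w, ← J_sum_eq_S n hn P u v w]
  obtain ⟨p0, hp0le, hp0⟩ := exists_bern_pos (3 * n - 1) h0u h1u
  obtain ⟨q0, hq0le, hq0⟩ := exists_bern_pos (3 * n - 1) h0v h1v
  obtain ⟨r0, hr0le, hr0⟩ := exists_bern_pos (3 * n - 1) h0w h1w
  have hterm_nonneg : ∀ p ∈ Finset.range (3 * n), ∀ q ∈ Finset.range (3 * n),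
      ∀ r ∈ Finset.range (3 * n),
      0 ≤ Jcoef n P p q r * bern (3 * n - 1) p u * bern (3 * n - 1) q v
        * bern (3 * n - 1) r w := by
    intro p hp q hq r hr
    have hJpos := hJ p q r (Finset.mem_range.1 hp) (Finset.mem_range.1 hq) (Finset.mem_range.1 hr)
    exact mul_nonneg (mul_nonneg (mul_nonneg hJpos.le (bern_nonneg h0u h1u))
      (bern_nonneg h0v h1v)) (bern_nonneg h0w h1w)
  have hp0m : p0 ∈ Finset.range (3 * n) := Finset.mem_range.2 (by omega)
  have hq0m : q0 ∈ Finset.range (3 * n) := Finset.mem_range.2 (by omega)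
  have hr0m : r0 ∈ Finset.range (3 * n) := Finset.mem_range.2 (by omega)
  refine Finset.sum_pos' (fun p hp => Finset.sum_nonneg fun q hq => Finset.sum_nonneg fun r hr =>
      hterm_nonneg p hp q hq r hr) ⟨p0, hp0m, ?_⟩
  refine Finset.sum_pos' (fun q hq => Finset.sum_nonneg fun r hr =>
      hterm_nonneg p0 hp0m q hq r hr) ⟨q0, hq0m, ?_⟩
  refine Finset.sum_pos' (fun r hr => hterm_nonneg p0 hp0m q0 hq0m r hr) ⟨r0, hr0m, ?_⟩
  have hJpos := hJ p0 q0 r0 (Finset.mem_range.1 hp0m) (Finset.mem_range.1 hq0m)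
    (Finset.mem_range.1 hr0m)
  exact mul_pos (mul_pos (mul_pos hJpos hp0) hq0) hr0
end

section
/- Let d ∈ ℕ and let g : ℝ → ℝ be a polynomial of degree at most d such that g(t) ≥ ρ > 0 for all t ∈ [0,1]. Then there exists σ₀ ∈ ℕ such that for every σ ≥ σ₀ and every i ∈ {0,…,σ−1}, the Bernstein coefficients of g on the subinterval [i/σ, (i+1)/σ] are all strictly positive; that is, if c₀,…,c_d ∈ ℝ satisfy g((i+t)/σ) = Σ_{p=0}^{d} c_p B_p^d(t) for all t, then c_p > 0 for all p ∈ {0,…,d}. -/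

lemma bern_key (d k : ℕ) (hk : k ≤ d) (t : ℝ) :
    ∑ p ∈ Finset.range (d+1), (p.choose k : ℝ) * bern d p t = (d.choose k : ℝ) * t ^ k := by
  have hsub : Finset.Ico k (d+1) ⊆ Finset.range (d+1) := by
    intro p hp; simp only [Finset.mem_Ico] at hp; simp [Finset.mem_range, hp.2]
  have h1 : ∀ p ∈ Finset.range (d+1), p ∉ Finset.Ico k (d+1) →
      (p.choose k : ℝ) * bern d p t = 0 := by
    intro p hp hp'
    simp only [Finset.mem_range] at hp
    simp only [Finset.mem_Ico] at hp'
    have : p < k := by omega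
    simp [Nat.choose_eq_zero_of_lt this]
  rw [← Finset.sum_subset hsub h1, Finset.sum_Ico_eq_sum_range]
  have hrw : d + 1 - k = (d - k) + 1 := by omega
  rw [hrw]
  have key : ∀ j ∈ Finset.range (d - k + 1),
      ((k + j).choose k : ℝ) * bern d (k + j) t
        = (d.choose k : ℝ) * t ^ k * (((d-k).choose j : ℝ) * t ^ j * (1-t) ^ (d - k - j)) := by
    intro j hj
    simp only [Finset.mem_range] at hj
    have hkj : k + j ≤ d := by omega
    have hid : d.choose (k + j) * (k + j).choose k = d.choose k * (d - k).choose j := by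
      have := Nat.choose_mul (n := d) (k := k + j) (s := k) (Nat.le_add_right _ _)
      simpa using this
    have hidR : ((k+j).choose k : ℝ) * (d.choose (k+j) : ℝ)
        = (d.choose k : ℝ) * ((d-k).choose j : ℝ) := by
      rw [mul_comm]; exact_mod_cast congrArg (Nat.cast : ℕ → ℝ) hid
    have hsub2 : d - (k + j) = d - k - j := by omega
    unfold bern
    rw [hsub2, pow_add]
    calc ((k+j).choose k : ℝ) * ((d.choose (k+j) : ℝ) * (t ^ k * t ^ j) * (1-t) ^ (d-k-j))
        = (((k+j).choose k : ℝ) * (d.choose (k+j) : ℝ)) * (t ^ k * t ^ j * (1-t) ^ (d-k-j)) := by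
          ring
      _ = _ := by rw [hidR]; ring
  rw [Finset.sum_congr rfl key, ← Finset.mul_sum]
  have hb : ∑ j ∈ Finset.range (d - k + 1),
      ((d-k).choose j : ℝ) * t ^ j * (1-t) ^ (d - k - j) = 1 := by
    calc ∑ j ∈ Finset.range (d - k + 1), ((d-k).choose j : ℝ) * t ^ j * (1-t) ^ (d - k - j)
        = ∑ j ∈ Finset.range (d - k + 1), t ^ j * (1-t) ^ (d - k - j) * ((d-k).choose j : ℝ) :=
          Finset.sum_congr rfl fun j _ => by ring
      _ = (t + (1 - t)) ^ (d - k) := (add_pow t (1 - t) (d - k)).symm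
      _ = 1 := by norm_num
  rw [hb, mul_one]


lemma bern_eq_eval (d p : ℕ) (t : ℝ) : bern d p t = (bernsteinPolynomial ℝ d p).eval t := by
  simp [bern, bernsteinPolynomial]

lemma bern_indep (d : ℕ) (e : ℕ → ℝ)
    (h : ∀ t : ℝ, ∑ p ∈ Finset.range (d+1), e p * bern d p t = 0) :
    ∀ p ≤ d, e p = 0 := by
  set Q : Polynomial ℝ := ∑ p ∈ Finset.range (d+1),
    Polynomial.C (e p) * bernsteinPolynomial ℝ d p with hQdef
  have hQ : Q = 0 := by
    apply Polynomial.funext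
    intro t
    simp only [hQdef, Polynomial.eval_finset_sum, Polynomial.eval_mul, Polynomial.eval_C,
      Polynomial.eval_zero]
    rw [← h t]
    exact Finset.sum_congr rfl fun p _ => by rw [bern_eq_eval]
  intro p
  induction p using Nat.strong_induction_on with
  | _ p ih =>
    intro hp
    have h0 : (Polynomial.derivative^[p] Q).eval 0 = 0 := by rw [hQ]; simp
    rw [hQdef, Polynomial.iterate_derivative_sum] at h0
    simp only [Polynomial.iterate_derivative_C_mul, Polynomial.eval_finset_sum,
      Polynomial.eval_mul, Polynomial.eval_C] at h0
    rw [Finset.sum_eq_single p] at h0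
    · have hne := bernsteinPolynomial.iterate_derivative_at_0_ne_zero ℝ d p hp
      exact (mul_eq_zero.mp h0).resolve_right hne
    · intro q hq hqp
      rcases lt_or_gt_of_ne hqp with hlt | hgt
      · rw [ih q hlt (le_trans (le_of_lt hlt) hp), zero_mul]
      · rw [bernsteinPolynomial.iterate_derivative_at_0_eq_zero_of_lt ℝ d hgt, mul_zero]
    · intro hnot
      exact absurd (Finset.mem_range.mpr (by omega)) hnot

/-- for a polynomial `g` of degree at most `d` with `g ≥ ρ > 0` on
`[0,1]`, all Bernstein coefficients of `g` on every subinterval `[i/σ, (i+1)/σ]`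
are strictly positive once the subdivision is fine enough. -/
theorem subdivided_bernstein_coeffs_pos (d : ℕ) (g : Polynomial ℝ)
    (hdeg : g.natDegree ≤ d) (ρ : ℝ) (hρ : 0 < ρ)
    (hg : ∀ t ∈ Set.Icc (0:ℝ) 1, ρ ≤ g.eval t) :
    ∃ σ₀ : ℕ, ∀ σ : ℕ, σ₀ ≤ σ → ∀ i : ℕ, i < σ → ∀ c : ℕ → ℝ,
      (∀ t : ℝ, g.eval (((i : ℝ) + t) / (σ : ℝ))
        = ∑ p ∈ Finset.range (d + 1), c p * bern d p t) →
      ∀ p ≤ d, 0 < c p := by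
  classical
  set M : ℝ := ∑ j ∈ Finset.range (d+1), |g.coeff j| * 2^d with hMdef
  have hM0 : 0 ≤ M := Finset.sum_nonneg fun j _ => by positivity
  refine ⟨max 1 (⌈((d:ℝ) * M)/ρ⌉₊ + 1), ?_⟩
  intro σ hσ i hi c hc
  have hσ1 : 1 ≤ σ := le_trans (le_max_left _ _) hσ
  have hσR : (0:ℝ) < σ := by exact_mod_cast hσ1
  set x : ℝ := i / σ with hxdef
  set s : ℝ := 1 / σ with hsdef
  have hx0 : 0 ≤ x := by positivity
  have hx1 : x ≤ 1 := by
    rw [hxdef, div_le_one hσR]; exact_mod_cast hi.le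
  have hs0 : 0 < s := by positivity
  have hs1 : s ≤ 1 := by rw [hsdef, div_le_one hσR]; exact_mod_cast hσ1
  set a : ℕ → ℝ := fun k => ∑ j ∈ Finset.range (d+1),
    g.coeff j * (j.choose k : ℝ) * x^(j-k) * s^k with hadef
  set F : ℕ → ℝ := fun p => ∑ k ∈ Finset.range (d+1),
    ((p.choose k : ℝ)/(d.choose k : ℝ)) * a k with hFdef
  -- Step A : expansion of the subdivided polynomial in the monomial basis
  have stepA : ∀ t : ℝ, g.eval (((i:ℝ) + t)/σ) = ∑ k ∈ Finset.range (d+1), a k * t^k := by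
    intro t
    have hxt : ((i:ℝ) + t)/σ = s * t + x := by
      rw [hxdef, hsdef]; field_simp; ring
    rw [hxt, Polynomial.eval_eq_sum_range' (Nat.lt_succ_of_le hdeg)]
    have hexp : ∀ j ∈ Finset.range (d+1),
        g.coeff j * (s * t + x)^j
          = ∑ k ∈ Finset.range (d+1), g.coeff j * (j.choose k : ℝ) * x^(j-k) * s^k * t^k := by
      intro j hj
      simp only [Finset.mem_range] at hj
      rw [add_pow]
      have hsub : Finset.range (j+1) ⊆ Finset.range (d+1) := Finset.range_subset_range.mpr (by omega)
      rw [Finset.sum_subset hsub (fun k hk hk' => by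
        simp only [Finset.mem_range, not_lt] at hk'
        simp [Nat.choose_eq_zero_of_lt (by omega : j < k)])]
      rw [Finset.mul_sum]
      exact Finset.sum_congr rfl fun k _ => by rw [mul_pow]; ring
    rw [Finset.sum_congr rfl hexp, Finset.sum_comm]
    refine Finset.sum_congr rfl fun k _ => ?_
    rw [hadef, Finset.sum_mul]
  -- Step B : the F's are Bernstein coefficients
  have stepB : ∀ t : ℝ, ∑ p ∈ Finset.range (d+1), F p * bern d p t
      = ∑ k ∈ Finset.range (d+1), a k * t^k := by
    intro t
    calc ∑ p ∈ Finset.range (d+1), F p * bern d p t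
        = ∑ p ∈ Finset.range (d+1), ∑ k ∈ Finset.range (d+1),
            (a k / (d.choose k : ℝ)) * ((p.choose k : ℝ) * bern d p t) := by
          refine Finset.sum_congr rfl fun p _ => ?_
          simp only [hFdef]
          rw [Finset.sum_mul]
          exact Finset.sum_congr rfl fun k _ => by ring
      _ = ∑ k ∈ Finset.range (d+1), (a k / (d.choose k : ℝ))
            * ∑ p ∈ Finset.range (d+1), (p.choose k : ℝ) * bern d p t := by
          rw [Finset.sum_comm]
          exact Finset.sum_congr rfl fun k _ => (Finset.mul_sum _ _ _).symm
      _ = ∑ k ∈ Finset.range (d+1), a k * t^k := by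
          refine Finset.sum_congr rfl fun k hk => ?_
          have hkd : k ≤ d := by simpa [Nat.lt_succ_iff] using Finset.mem_range.mp hk
          rw [bern_key d k hkd t]
          have hc0 : (d.choose k : ℝ) ≠ 0 := by
            exact_mod_cast (Nat.choose_pos hkd).ne'
          field_simp
  -- Step C : uniqueness, c = F
  have hcF : ∀ p ≤ d, c p = F p := by
    have h0 : ∀ t : ℝ, ∑ p ∈ Finset.range (d+1), (c p - F p) * bern d p t = 0 := by
      intro t
      have h1 := hc t
      rw [stepA t] at h1
      calc ∑ p ∈ Finset.range (d+1), (c p - F p) * bern d p t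
          = ∑ p ∈ Finset.range (d+1), c p * bern d p t
            - ∑ p ∈ Finset.range (d+1), F p * bern d p t := by
            rw [← Finset.sum_sub_distrib]
            exact Finset.sum_congr rfl fun p _ => by ring
        _ = 0 := by rw [stepB t, ← h1]; ring
    intro p hp
    have := bern_indep d (fun p => c p - F p) h0 p hp
    simpa [sub_eq_zero] using this
  -- Step D : estimates
  have ha0 : ρ ≤ a 0 := by
    have he : a 0 = g.eval x := by
      rw [Polynomial.eval_eq_sum_range' (Nat.lt_succ_of_le hdeg)]
      simp only [hadef]
      exact Finset.sum_congr rfl fun j _ => by simp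
    rw [he]; exact hg x ⟨hx0, hx1⟩
  have hak : ∀ k, 1 ≤ k → |a k| ≤ M * s := by
    intro k hk
    simp only [hadef]
    calc |∑ j ∈ Finset.range (d+1), g.coeff j * (j.choose k : ℝ) * x^(j-k) * s^k|
        ≤ ∑ j ∈ Finset.range (d+1), |g.coeff j * (j.choose k : ℝ) * x^(j-k) * s^k| :=
          Finset.abs_sum_le_sum_abs _ _
      _ ≤ ∑ j ∈ Finset.range (d+1), |g.coeff j| * 2^d * s := by
          refine Finset.sum_le_sum fun j hj => ?_
          simp only [Finset.mem_range] at hj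
          have hnat : j.choose k ≤ 2 ^ d := by
            rcases le_or_gt k j with h | h
            · calc j.choose k ≤ ∑ m ∈ Finset.range (j+1), j.choose m :=
                  Finset.single_le_sum (fun m _ => Nat.zero_le _)
                    (Finset.mem_range.mpr (by omega))
                _ = 2 ^ j := Nat.sum_range_choose j
                _ ≤ 2 ^ d := Nat.pow_le_pow_right (by norm_num) (by omega)
            · simp [Nat.choose_eq_zero_of_lt h]
          have h1 : ((j.choose k : ℝ)) ≤ 2^d := by exact_mod_cast hnat
          have h2 : x^(j-k) ≤ 1 := pow_le_one₀ hx0 hx1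
          have h3 : s^k ≤ s := by
            obtain ⟨m, rfl⟩ : ∃ m, k = m + 1 := ⟨k - 1, by omega⟩
            calc s^(m+1) = s^m * s := pow_succ s m
              _ ≤ 1 * s := by
                  exact mul_le_mul_of_nonneg_right (pow_le_one₀ hs0.le hs1) hs0.le
              _ = s := one_mul s
          rw [abs_mul, abs_mul, abs_mul]
          rw [abs_of_nonneg (by positivity : (0:ℝ) ≤ (j.choose k : ℝ)),
            abs_of_nonneg (by positivity : (0:ℝ) ≤ x^(j-k)),
            abs_of_nonneg (by positivity : (0:ℝ) ≤ s^k)]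
          calc |g.coeff j| * (j.choose k : ℝ) * x^(j-k) * s^k
              ≤ |g.coeff j| * 2^d * 1 * s := by gcongr <;> positivity
            _ = |g.coeff j| * 2^d * s := by ring
      _ = M * s := by rw [hMdef, Finset.sum_mul]
  -- conclusion
  intro p hp
  rw [hcF p hp]
  have hFsplit : F p = (p.choose 0 : ℝ)/(d.choose 0 : ℝ) * a 0
      + ∑ k ∈ Finset.range d, ((p.choose (k+1) : ℝ)/(d.choose (k+1) : ℝ)) * a (k+1) := by
    simp only [hFdef]
    rw [Finset.sum_range_succ']
    ring
  have hterm : ∀ k ∈ Finset.range d,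
      -(M * s) ≤ ((p.choose (k+1):ℝ)/(d.choose (k+1):ℝ)) * a (k+1) := by
    intro k hk
    simp only [Finset.mem_range] at hk
    set r : ℝ := ((p.choose (k+1):ℝ)/(d.choose (k+1):ℝ)) with hr
    have hr0 : 0 ≤ r := by positivity
    have hr1 : r ≤ 1 := by
      rw [hr, div_le_one (by exact_mod_cast Nat.choose_pos (by omega : k+1 ≤ d))]
      exact_mod_cast Nat.choose_le_choose (k+1) hp
    have habs : |r * a (k+1)| ≤ M * s := by
      rw [abs_mul, abs_of_nonneg hr0]
      calc r * |a (k+1)| ≤ 1 * (M * s) :=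
            mul_le_mul hr1 (hak (k+1) (by omega)) (abs_nonneg _) one_pos.le
        _ = M * s := one_mul _
    have := neg_abs_le (r * a (k+1))
    linarith
  have hsum : -((d:ℝ) * (M * s))
      ≤ ∑ k ∈ Finset.range d, ((p.choose (k+1):ℝ)/(d.choose (k+1):ℝ)) * a (k+1) := by
    calc -((d:ℝ) * (M * s)) = ∑ _k ∈ Finset.range d, -(M*s) := by
          rw [Finset.sum_const, Finset.card_range, nsmul_eq_mul]; ring
      _ ≤ _ := Finset.sum_le_sum hterm
  have hfin : (d:ℝ) * (M * s) < ρ := by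
    have hceil : ((d:ℝ) * M)/ρ < σ := by
      have h1 : ((d:ℝ) * M)/ρ ≤ (⌈((d:ℝ) * M)/ρ⌉₊ : ℝ) := Nat.le_ceil _
      have h2 : (⌈((d:ℝ)*M)/ρ⌉₊ + 1 : ℕ) ≤ σ := le_trans (le_max_right _ _) hσ
      have h3 : ((⌈((d:ℝ)*M)/ρ⌉₊ : ℝ)) + 1 ≤ σ := by exact_mod_cast h2
      linarith
    have hlt : (d:ℝ) * M < ρ * σ := by
      rw [div_lt_iff₀ hρ] at hceil
      linarith
    have he : (d:ℝ) * (M * s) = ((d:ℝ)*M)/σ := by rw [hsdef]; ring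
    rw [he, div_lt_iff₀ hσR]
    linarith
  have h00 : (p.choose 0 : ℝ)/(d.choose 0:ℝ) = 1 := by simp
  rw [hFsplit, h00, one_mul]
  linarith
end
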